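/- Let 𝒳 be a finite nonempty set, let P be a pmf on 𝒳 with P(x) > 0 for all x, and let 0 ≤ R < H(P). Then E_sec(R) := inf{ D(Q‖P) : Q a pmf on 𝒳 with H(Q) ≤ R } > 0 (with inf ∅ := +∞). -/

import Mathlib

open scoped ENNReal

/-- A probability mass function on a finite set. -/
def IsPMF {α : Type*} [Fintype α] (Q : α → ℝ) : Prop :=
  (∀ a, 0 ≤ Q a) ∧ ∑ a, Q a = 1

/-- Shannon entropy `H(Q) = −∑ Q a ln Q a` (with `0 ln 0 = 0`, automatic since `ln 0 = 0`). -/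
noncomputable def shannonEnt {α : Type*} [Fintype α] (Q : α → ℝ) : ℝ :=
  -∑ a, Q a * Real.log (Q a)

/-- Relative entropy `D(Q‖P) = ∑ Q a ln(Q a / P a)` (finite here since `P` is positive). -/
noncomputable def relEnt {α : Type*} [Fintype α] (Q P : α → ℝ) : ℝ :=
  ∑ a, Q a * Real.log (Q a / P a)

/-- Gibbs' inequality, strict version: if `Q ≠ P` then `D(Q‖P) > 0`. -/
lemma relEnt_pos_of_ne {α : Type*} [Fintype α] (Q P : α → ℝ)
    (hQ : IsPMF Q) (hP : IsPMF P) (hpos : ∀ x, 0 < P x) (hne : Q ≠ P) :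
    0 < relEnt Q P := by
  obtain ⟨a₀, ha₀⟩ : ∃ a, Q a ≠ P a := by
    by_contra h
    push_neg at h
    exact hne (funext h)
  have key : ∑ a, Q a * Real.log (P a / Q a) < ∑ a, (P a - Q a) := by
    apply Finset.sum_lt_sum
    · intro a _
      rcases eq_or_lt_of_le (hQ.1 a) with h0 | h0
      · rw [← h0]
        simp [le_of_lt (hpos a)]
      · have hdiv : 0 < P a / Q a := div_pos (hpos a) h0
        have := Real.log_le_sub_one_of_pos hdiv
        have h2 : Q a * Real.log (P a / Q a) ≤ Q a * (P a / Q a - 1) :=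
          mul_le_mul_of_nonneg_left this (le_of_lt h0)
        calc Q a * Real.log (P a / Q a) ≤ Q a * (P a / Q a - 1) := h2
          _ = P a - Q a := by field_simp
    · refine ⟨a₀, Finset.mem_univ _, ?_⟩
      rcases eq_or_lt_of_le (hQ.1 a₀) with h0 | h0
      · rw [← h0]
        simpa using hpos a₀
      · have hdiv : 0 < P a₀ / Q a₀ := div_pos (hpos a₀) h0
        have hne1 : P a₀ / Q a₀ ≠ 1 := by
          intro h
          exact ha₀ ((div_eq_one_iff_eq (ne_of_gt h0)).mp h).symm
        have := Real.log_lt_sub_one_of_pos hdiv hne1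
        have h2 : Q a₀ * Real.log (P a₀ / Q a₀) < Q a₀ * (P a₀ / Q a₀ - 1) :=
          (mul_lt_mul_iff_right₀ h0).mpr this
        calc Q a₀ * Real.log (P a₀ / Q a₀) < Q a₀ * (P a₀ / Q a₀ - 1) := h2
          _ = P a₀ - Q a₀ := by field_simp
  have hsum : ∑ a, (P a - Q a) = 0 := by
    rw [Finset.sum_sub_distrib, hP.2, hQ.2, sub_self]
  rw [hsum] at key
  have hrel : relEnt Q P = -∑ a, Q a * Real.log (P a / Q a) := by
    rw [relEnt, ← Finset.sum_neg_distrib]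
    refine Finset.sum_congr rfl fun a _ => ?_
    rcases eq_or_lt_of_le (hQ.1 a) with h0 | h0
    · simp [← h0]
    · rw [Real.log_div (ne_of_gt h0) (ne_of_gt (hpos a)),
        Real.log_div (ne_of_gt (hpos a)) (ne_of_gt h0)]
      ring
  rw [hrel]
  linarith

/-- The secrecy exponent `E_sec(R) = inf{D(Q‖P) : H(Q) ≤ R}` (with `inf ∅ = +∞`,
realized by the infimum in `[0,∞]` over the possibly empty subtype) is strictly
positive whenever `0 ≤ R < H(P)`. -/
theorem secrecy_exponent_positive {α : Type*} [Fintype α] [Nonempty α]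
    (P : α → ℝ) (hP : IsPMF P) (hpos : ∀ x, 0 < P x)
    (R : ℝ) (hR0 : 0 ≤ R) (hR : R < shannonEnt P) :
    0 < ⨅ Q : {Q : α → ℝ // IsPMF Q ∧ shannonEnt Q ≤ R},
        ENNReal.ofReal (relEnt Q.1 P) := by
  by_cases hne : Nonempty {Q : α → ℝ // IsPMF Q ∧ shannonEnt Q ≤ R}
  swap
  · haveI := not_nonempty_iff.mp hne
    rw [iInf_of_empty]
    exact ENNReal.zero_lt_top
  -- continuous surrogate for relEnt (agrees on nonneg vectors)
  set g : (α → ℝ) → ℝ := fun Q => ∑ a, (Q a * Real.log (Q a) - Q a * Real.log (P a)) with hg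
  have hg_eq : ∀ Q : α → ℝ, (∀ a, 0 ≤ Q a) → g Q = relEnt Q P := by
    intro Q hQnn
    refine Finset.sum_congr rfl fun a _ => ?_
    rcases eq_or_lt_of_le (hQnn a) with h0 | h0
    · simp [← h0]
    · rw [Real.log_div (ne_of_gt h0) (ne_of_gt (hpos a))]
      ring
  have hg_cont : Continuous g := by
    apply continuous_finset_sum
    intro a _
    exact (Real.continuous_mul_log.comp (continuous_apply a)).sub
      ((continuous_apply a).mul continuous_const)
  have hH_cont : Continuous (shannonEnt (α := α)) := by
    apply Continuous.neg
    apply continuous_finset_sum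
    intro a _
    exact Real.continuous_mul_log.comp (continuous_apply a)
  -- the constraint set
  set K : Set (α → ℝ) := {Q | IsPMF Q ∧ shannonEnt Q ≤ R} with hK
  have hKsub : K = stdSimplex ℝ α ∩ {Q | shannonEnt Q ≤ R} := by
    ext Q; rfl
  have hKcompact : IsCompact K := by
    rw [hKsub]
    exact (isCompact_stdSimplex ℝ α).inter_right (isClosed_le hH_cont continuous_const)
  have hKne : K.Nonempty := by
    obtain ⟨Q⟩ := hne
    exact ⟨Q.1, Q.2⟩
  obtain ⟨Q₀, hQ₀K, hmin⟩ := hKcompact.exists_isMinOn hKne hg_cont.continuousOn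
  have hQ₀pos : 0 < relEnt Q₀ P := by
    apply relEnt_pos_of_ne Q₀ P hQ₀K.1 hP hpos
    intro h
    rw [h] at hQ₀K
    exact absurd hQ₀K.2 (not_le.mpr hR)
  have hm : 0 < g Q₀ := by rw [hg_eq Q₀ hQ₀K.1.1]; exact hQ₀pos
  calc (0 : ℝ≥0∞) < ENNReal.ofReal (g Q₀) := ENNReal.ofReal_pos.mpr hm
    _ ≤ _ := by
      apply le_iInf
      intro Q
      apply ENNReal.ofReal_le_ofReal
      rw [← hg_eq Q.1 Q.2.1.1]
      exact hmin Q.2
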